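/- The inverse q-multinomial identity: for every integer m ≥ 1, Σ over all ordered compositions (m_1,...,m_k) of m of (-1)^k · ([m](q)!/([m_1](q)!···[m_k](q)!)) · q^{Σ_i binomial(m_i,2)} equals (-1)^m, as polynomials in q. -/

import Mathlib

open Finset

noncomputable def qB (d : ℕ) : RatFunc ℚ := ∑ i ∈ Finset.range d, RatFunc.X ^ i
noncomputable def qF (d : ℕ) : RatFunc ℚ := ∏ j ∈ Finset.range d, qB (j + 1)

lemma qB_ne_zero {d : ℕ} (hd : 0 < d) : qB d ≠ 0 := by
  have h : qB d = algebraMap (Polynomial ℚ) (RatFunc ℚ)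
      (∑ i ∈ Finset.range d, Polynomial.X ^ i) := by
    simp [qB, map_sum, map_pow, RatFunc.algebraMap_X]
  rw [h]
  apply RatFunc.algebraMap_ne_zero
  intro hc
  have := congrArg (Polynomial.eval (1:ℚ)) hc
  simp [Polynomial.eval_finset_sum] at this
  omega

lemma qF_ne_zero (d : ℕ) : qF d ≠ 0 := by
  apply Finset.prod_ne_zero_iff.2
  intro j _
  exact qB_ne_zero (Nat.succ_pos j)

lemma qF_succ (d : ℕ) : qF (d + 1) = qF d * qB (d + 1) := Finset.prod_range_succ _ _

lemma qF_zero : qF 0 = 1 := Finset.prod_range_zero _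

lemma qB_add (a b : ℕ) : qB (a + b) = qB a + RatFunc.X ^ a * qB b := by
  rw [qB, Finset.sum_range_add]
  simp only [qB, Finset.mul_sum, pow_add]

lemma pascal_step (k b : ℕ) :
    (-1 : RatFunc ℚ) ^ k * RatFunc.X ^ ((k+1).choose 2) * (qF (k+1+b) / (qF k * qF (b+1)))
      + (-1) ^ (k+1) * RatFunc.X ^ ((k+1).choose 2) * (qF (k+1+b+1) / (qF (k+1) * qF (b+1)))
    = (-1) ^ (k+1) * RatFunc.X ^ ((k+2).choose 2) * (qF (k+1+b) / (qF (k+1) * qF b)) := by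
  have h2 : (k+2).choose 2 = (k+1).choose 2 + (k+1) := by
    simp [Nat.choose_two_right]; ring_nf; omega
  have e1 : qF (k+1+b+1) = qF (k+1+b) * (qB (k+1) + RatFunc.X ^ (k+1) * qB (b+1)) := by
    rw [show k+1+b+1 = (k+1+b)+1 from rfl, qF_succ, show k+1+b+1 = (k+1)+(b+1) by ring, qB_add]
  have e2 : qF (k+1) = qF k * qB (k+1) := qF_succ k
  have e3 : qF (b+1) = qF b * qB (b+1) := qF_succ b
  have n1 := qF_ne_zero k
  have n2 := qF_ne_zero b
  have n3 : qB (k+1) ≠ 0 := qB_ne_zero (Nat.succ_pos k)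
  have n4 : qB (b+1) ≠ 0 := qB_ne_zero (Nat.succ_pos b)
  rw [h2, e1, e2, e3]
  field_simp
  ring

lemma telescope (n : ℕ) : ∀ k, k ≤ n →
    ∑ j ∈ Finset.range (k+1),
        (-1 : RatFunc ℚ) ^ j * RatFunc.X ^ (j.choose 2) * (qF (n+1) / (qF j * qF (n+1-j)))
      = (-1) ^ k * RatFunc.X ^ ((k+1).choose 2) * (qF n / (qF k * qF (n-k))) := by
  intro k
  induction k with
  | zero =>
    intro _
    simp [qF_zero, Nat.choose, div_self (qF_ne_zero (n+1)), div_self (qF_ne_zero n)]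
  | succ k ih =>
    intro hk
    rw [Finset.sum_range_succ, ih (Nat.le_of_succ_le hk)]
    obtain ⟨b, rfl⟩ : ∃ b, n = k + 1 + b := ⟨n - (k+1), by omega⟩
    have r1 : k + 1 + b + 1 - (k + 1) = b + 1 := by omega
    have r2 : k + 1 + b - k = b + 1 := by omega
    have r3 : k + 1 + b - (k + 1) = b := by omega
    rw [r1, r2, r3]
    exact pascal_step k b

lemma alt_sum (m : ℕ) (hm : 1 ≤ m) :
    ∑ j ∈ Finset.range (m+1),
        (-1 : RatFunc ℚ) ^ j * RatFunc.X ^ (j.choose 2) * (qF m / (qF j * qF (m-j)))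
      = 0 := by
  obtain ⟨n, rfl⟩ : ∃ n, m = n + 1 := ⟨m - 1, by omega⟩
  rw [Finset.sum_range_succ, telescope n n le_rfl]
  simp [qF_zero, div_self (qF_ne_zero (n+1)), div_self (qF_ne_zero n), pow_succ]

lemma comp_heq : ∀ {a b : ℕ} (h : a = b) (x : Composition a) (y : Composition b),
    x.blocks = y.blocks → HEq x y := by
  intro a b h
  subst h
  intro x y hxy
  exact heq_of_eq (Composition.ext hxy)

/-- Split a composition of `n+1` into its first block and the rest. -/
def splitEquiv (n : ℕ) : (Σ r : Fin (n+1), Composition r) ≃ Composition (n+1) where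
  toFun p := ⟨(n + 1 - p.1) :: p.2.blocks,
    by
      intro i hi
      rcases List.mem_cons.1 hi with h | h
      · have : (p.1 : ℕ) ≤ n := Nat.lt_succ_iff.1 p.1.isLt
        omega
      · exact p.2.blocks_pos h,
    by
      have := p.2.blocks_sum
      simp only [List.sum_cons, this]
      have : (p.1 : ℕ) ≤ n := Nat.lt_succ_iff.1 p.1.isLt
      omega⟩
  invFun c := ⟨⟨c.blocks.tail.sum, by
      rcases hb : c.blocks with _ | ⟨h, t⟩
      · exact absurd (hb ▸ c.blocks_sum) (by simp)
      · have hs := c.blocks_sum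
        rw [hb] at hs
        have hp : 0 < h := c.blocks_pos (hb ▸ List.mem_cons_self)
        simp only [hb, List.tail_cons]
        simp only [List.sum_cons] at hs
        omega⟩,
    ⟨c.blocks.tail, fun hi => c.blocks_pos (List.mem_of_mem_tail hi), rfl⟩⟩
  left_inv p := by
    rcases p with ⟨r, c⟩
    have hs : c.blocks.sum = (r : ℕ) := c.blocks_sum
    refine Sigma.ext (Fin.ext (by simpa using hs)) (comp_heq (by simpa using hs) _ _ (by simp))
  right_inv c := by
    apply Composition.ext
    rcases hb : c.blocks with _ | ⟨h, t⟩
    · exact absurd (hb ▸ c.blocks_sum) (by simp)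
    · have hs := c.blocks_sum
      rw [hb] at hs
      simp only [List.sum_cons] at hs
      simp only [hb, List.tail_cons]
      congr 1
      omega

noncomputable def S (n : ℕ) : RatFunc ℚ :=
  ∑ c : Composition n,
    (-1 : RatFunc ℚ) ^ c.length * (qF n / (c.blocks.map qF).prod) *
      RatFunc.X ^ ((c.blocks.map fun b => b.choose 2).sum)

lemma map_prod_ne (l : List ℕ) : (l.map qF).prod ≠ 0 := by
  induction l with
  | nil => simp
  | cons h t ih => simp [qF_ne_zero, ih]

lemma S_zero : S 0 = 1 := by
  have h1 : ∀ c : Composition 0,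
      (-1 : RatFunc ℚ) ^ c.length * (qF 0 / (c.blocks.map qF).prod) *
        RatFunc.X ^ ((c.blocks.map fun b => b.choose 2).sum) = 1 := by
    intro c
    have hb : c.blocks = [] := by
      rcases hb : c.blocks with _ | ⟨h, t⟩
      · rfl
      · have hs := c.blocks_sum
        rw [hb] at hs
        have hp : 0 < h := c.blocks_pos (hb ▸ List.mem_cons_self)
        simp [List.sum_cons] at hs
        omega
    simp [Composition.length, hb, qF_zero]
  rw [S, Finset.sum_congr rfl (fun c _ => h1 c), Finset.sum_const]
  simp [Finset.card_univ, composition_card]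

lemma term_split (n : ℕ) (r : Fin (n+1)) (c : Composition r) :
    (-1 : RatFunc ℚ) ^ (splitEquiv n ⟨r, c⟩).length *
        (qF (n+1) / ((splitEquiv n ⟨r, c⟩).blocks.map qF).prod) *
        RatFunc.X ^ (((splitEquiv n ⟨r, c⟩).blocks.map fun b => b.choose 2).sum)
    = -((qF (n+1) / (qF (n+1-(r:ℕ)) * qF (r:ℕ))) * RatFunc.X ^ ((n+1-(r:ℕ)).choose 2)) *
        ((-1 : RatFunc ℚ) ^ c.length * (qF (r:ℕ) / (c.blocks.map qF).prod) *
          RatFunc.X ^ ((c.blocks.map fun b => b.choose 2).sum)) := by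
  have hb : (splitEquiv n ⟨r, c⟩).blocks = (n + 1 - (r:ℕ)) :: c.blocks := rfl
  have hl : (splitEquiv n ⟨r, c⟩).length = c.length + 1 := by
    simp [Composition.length, hb]
  rw [hb, hl]
  simp only [List.map_cons, List.prod_cons, List.sum_cons]
  have n1 := qF_ne_zero (n+1-(r:ℕ))
  have n2 := qF_ne_zero (r:ℕ)
  have n3 := map_prod_ne c.blocks
  rw [pow_succ, pow_add]
  field_simp

lemma S_eq : ∀ n, S n = (-1 : RatFunc ℚ) ^ n := by
  intro n
  induction n using Nat.strong_induction_on with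
  | _ n ih =>
    match n with
    | 0 => simpa using S_zero
    | Nat.succ n =>
      have key : S (n+1) =
          ∑ p : Σ r : Fin (n+1), Composition r,
            (-1 : RatFunc ℚ) ^ (splitEquiv n p).length *
              (qF (n+1) / ((splitEquiv n p).blocks.map qF).prod) *
              RatFunc.X ^ (((splitEquiv n p).blocks.map fun b => b.choose 2).sum) :=
        (Equiv.sum_comp (splitEquiv n) _).symm
      rw [key, ← Finset.univ_sigma_univ, Finset.sum_sigma]
      have inner : ∀ r : Fin (n+1),
          (∑ c : Composition (r:ℕ),
            (-1 : RatFunc ℚ) ^ (splitEquiv n ⟨r, c⟩).length *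
              (qF (n+1) / ((splitEquiv n ⟨r, c⟩).blocks.map qF).prod) *
              RatFunc.X ^ (((splitEquiv n ⟨r, c⟩).blocks.map fun b => b.choose 2).sum))
          = -((qF (n+1) / (qF (n+1-(r:ℕ)) * qF (r:ℕ))) *
              RatFunc.X ^ ((n+1-(r:ℕ)).choose 2)) * (-1 : RatFunc ℚ) ^ (r:ℕ) := by
        intro r
        rw [Finset.sum_congr rfl (fun c _ => term_split n r c), ← Finset.mul_sum]
        rw [show (∑ c : Composition (r:ℕ),
            (-1 : RatFunc ℚ) ^ c.length * (qF (r:ℕ) / (c.blocks.map qF).prod) *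
              RatFunc.X ^ ((c.blocks.map fun b => b.choose 2).sum)) = S (r:ℕ) from rfl]
        rw [ih (r:ℕ) r.isLt]
      rw [Finset.sum_congr rfl (fun r _ => inner r)]
      rw [Fin.sum_univ_eq_sum_range (fun i =>
        -((qF (n+1) / (qF (n+1-i) * qF i)) * RatFunc.X ^ ((n+1-i).choose 2)) *
          (-1 : RatFunc ℚ) ^ i)]
      have halt := alt_sum (n+1) (by omega)
      rw [Finset.sum_range_succ'] at halt
      have h0 : (-1 : RatFunc ℚ) ^ 0 * RatFunc.X ^ (Nat.choose 0 2) *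
          (qF (n+1) / (qF 0 * qF (n+1-0))) = 1 := by
        simp [qF_zero, Nat.choose, div_self (qF_ne_zero (n+1))]
      rw [h0] at halt
      have hsum : (∑ j ∈ Finset.range (n+1),
          (-1 : RatFunc ℚ) ^ (j+1) * RatFunc.X ^ ((j+1).choose 2) *
            (qF (n+1) / (qF (j+1) * qF (n+1-(j+1))))) = -1 := by
        exact eq_neg_of_add_eq_zero_left halt
      have refl := Finset.sum_range_reflect (fun i =>
        -((qF (n+1) / (qF (n+1-i) * qF i)) * RatFunc.X ^ ((n+1-i).choose 2)) *
          (-1 : RatFunc ℚ) ^ i) (n+1)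
      rw [← refl]
      have hterm : ∀ j ∈ Finset.range (n+1),
          -((qF (n+1) / (qF (n+1-(n+1-1-j)) * qF (n+1-1-j))) *
            RatFunc.X ^ ((n+1-(n+1-1-j)).choose 2)) * (-1 : RatFunc ℚ) ^ (n+1-1-j)
          = (-1:RatFunc ℚ)^n * ((-1) ^ (j+1) * RatFunc.X ^ ((j+1).choose 2) *
            (qF (n+1) / (qF (j+1) * qF (n+1-(j+1))))) := by
        intro j hj
        have hj' : j ≤ n := by
          have := Finset.mem_range.1 hj
          omega
        rw [show n+1-1-j = n-j by omega, show n+1-(n-j) = j+1 by omega,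
            show n+1-(j+1) = n-j by omega]
        have hsign : ((-1 : RatFunc ℚ)) ^ (n-j) = (-1)^n * (-1)^j := by
          rw [← pow_add, show n+j = (n-j) + 2*j by omega, pow_add, pow_mul]
          norm_num
        rw [hsign]
        ring
      rw [Finset.sum_congr rfl hterm, ← Finset.mul_sum, hsum]
      simp [pow_succ]

/-- **The inverse q-multinomial identity** (Möbius inverse of Solomon's identity for
root system `A_{m-1}`).  For `m ≥ 1`, summing over all ordered compositions
`(m₁, …, m_k)` of `m`:
`∑ (-1)^k ([m]!(q)/([m₁]!(q) ⋯ [m_k]!(q))) · q^(∑ᵢ C(mᵢ,2)) = (-1)^m`,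
where `[d](q) = 1 + q + ⋯ + q^(d-1)` and `[d]!(q) = [1](q)[2](q)⋯[d](q)`. -/
theorem q_multinomial_inverse_identity (m : ℕ) (hm : 1 ≤ m) :
    letI X : RatFunc ℚ := RatFunc.X
    letI qb : ℕ → RatFunc ℚ := fun d => ∑ i ∈ Finset.range d, X ^ i
    letI qfact : ℕ → RatFunc ℚ := fun d => ∏ j ∈ Finset.range d, qb (j + 1)
    ∑ c : Composition m,
        (-1 : RatFunc ℚ) ^ c.length * (qfact m / (c.blocks.map qfact).prod) *
          X ^ (c.blocks.map fun b => b.choose 2).sum =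
      (-1 : RatFunc ℚ) ^ m := by
  exact S_eq m
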